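/- Let f be a homogeneous Boolean function of algebraic degree r ≤ n in n variables and let k ≤ n. Then f has a degree-drop affine subspace of co-dimension k if and only if f ∼_{r-1} g for some homogeneous Boolean function g of degree r in which each monomial of g contains at least one of the variables x_1, x_2, ..., x_k. -/

import Mathlib

open Finset

/-- A Boolean function in `n` variables. -/
abbrev BF (n : ℕ) := (Fin n → ZMod 2) → ZMod 2

/-- The coefficient, in the algebraic normal form of `f`, of the monomial whose
set of variables is `S` (computed by the Möbius/binary Möbius transform). -/
def anf {n : ℕ} (f : BF n) (S : Finset (Fin n)) : ZMod 2 :=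
  ∑ T ∈ S.powerset, f (fun i => if i ∈ T then 1 else 0)

/-- The algebraic degree of a Boolean function, with `⊥` (i.e. `-∞`) for the zero function. -/
def degB {n : ℕ} (f : BF n) : WithBot ℕ :=
  (Finset.univ.filter (fun S : Finset (Fin n) => anf f S ≠ 0)).sup
    (fun S => (S.card : WithBot ℕ))

/-- `f` is homogeneous of degree `r`: all monomials of its ANF have degree `r`. -/
def Homog {n : ℕ} (f : BF n) (r : ℕ) : Prop :=
  ∀ S : Finset (Fin n), anf f S ≠ 0 → S.card = r

/-- `φ` is an affine map. -/
def IsAffineMap {n m : ℕ} (φ : (Fin m → ZMod 2) → (Fin n → ZMod 2)) : Prop :=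
  ∃ (L : (Fin m → ZMod 2) →ₗ[ZMod 2] (Fin n → ZMod 2)) (b : Fin n → ZMod 2),
    φ = fun x => L x + b

/-- `A` is a degree-drop affine subspace of co-dimension `k` for `f` : `A` is the range of an
injective affine parametrization `φ` defined on `F_2^{n-k}`, and the restriction `f|_A`,
viewed as the Boolean function `f ∘ φ` in `n-k` variables, has degree `< deg f`. -/
def DegreeDropSet {n : ℕ} (f : BF n) (k : ℕ) (A : Set (Fin n → ZMod 2)) : Prop :=
  ∃ φ : (Fin (n - k) → ZMod 2) → (Fin n → ZMod 2),
    IsAffineMap φ ∧ Function.Injective φ ∧ Set.range φ = A ∧ degB (f ∘ φ) < degB f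

/-- `f` has some degree-drop affine subspace of co-dimension `k`. -/
def HasDDS {n : ℕ} (f : BF n) (k : ℕ) : Prop :=
  ∃ A : Set (Fin n → ZMod 2), DegreeDropSet f k A

/-- `SimEq r f g` is the relation `f ∼_{r-1} g` : there are an invertible affine
transformation `x ↦ L x + b` of `F_2^n` and a Boolean function `h` of degree at most `r-1`
such that `g = f ∘ φ + h`. -/
def SimEq {n : ℕ} (r : ℕ) (f g : BF n) : Prop :=
  ∃ (L : (Fin n → ZMod 2) ≃ₗ[ZMod 2] (Fin n → ZMod 2)) (b : Fin n → ZMod 2) (h : BF n),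
    degB h ≤ ((r - 1 : ℕ) : WithBot ℕ) ∧ g = fun x => f (L x + b) + h x

/-- The complement `f^c` of a (homogeneous) Boolean function: each monomial `m` of the ANF
is replaced by the monomial on the complementary set of variables. -/
def bcompl {n : ℕ} (f : BF n) : BF n :=
  fun x => ∑ S ∈ Finset.univ.filter (fun S : Finset (Fin n) => anf f S ≠ 0), ∏ i ∈ Sᶜ, x i

/-- Discrete derivative of `f` in direction `a`. -/
def deriv1 {n : ℕ} (a : Fin n → ZMod 2) (f : BF n) : BF n :=
  fun x => f (x + a) + f x

/-- `a` is a fast point of `f` : `a ≠ 0` and `deg (D_a f) < deg f - 1`. -/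
def FastPoint {n : ℕ} (f : BF n) (a : Fin n → ZMod 2) : Prop :=
  a ≠ 0 ∧ degB (deriv1 a f) + 1 < degB f

/-- Membership in `K_{k,r,n}` : `f` is a nonzero homogeneous Boolean function of degree `r`
in `n` variables with no degree-drop affine subspace of co-dimension `k`. -/
def memK {n : ℕ} (k r : ℕ) (f : BF n) : Prop :=
  Homog f r ∧ degB f = (r : WithBot ℕ) ∧ ¬ HasDDS f k

/-- The restriction degree stability of `f` : the largest `k` such that `f` has no
degree-drop affine subspace of co-dimension `k`. -/
noncomputable def degStab {n : ℕ} (f : BF n) : ℕ :=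
  sSup {k : ℕ | ¬ HasDDS f k}

/-- `deg_stab(r,n)` : the maximum of `degStab f` over all Boolean functions `f` of
degree `r` in `n` variables. -/
noncomputable def degStabRN (r n : ℕ) : ℕ :=
  sSup {d : ℕ | ∃ f : BF n, degB f = (r : WithBot ℕ) ∧ d = degStab f}

/-- `g` depends only on the variables in `S`. -/
def DependsOnlyOn {n : ℕ} (g : BF n) (S : Finset (Fin n)) : Prop :=
  ∀ x y : Fin n → ZMod 2, (∀ i ∈ S, x i = y i) → g x = g y

/-- `rank_{r-1}(f)` : the minimum `m` such that some Boolean function `g` depending on only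
`m` of the variables satisfies `f ∼_{r-1} g`. -/
noncomputable def rankB {n : ℕ} (r : ℕ) (f : BF n) : ℕ :=
  sInf {m : ℕ | ∃ g : BF n, SimEq r f g ∧
    ∃ S : Finset (Fin n), S.card = m ∧ DependsOnlyOn g S}

/-- Iterated discrete derivative `D_{a_1}(D_{a_2}(⋯ D_{a_k} f))` along a list of directions. -/
def derivList {n : ℕ} : List (Fin n → ZMod 2) → BF n → BF n
  | [], f => f
  | a :: l, f => deriv1 a (derivList l f)
lemma zmod2_add_self (a : ZMod 2) : a + a = 0 := by revert a; decide
lemma zmod2_mul_self (a : ZMod 2) : a * a = a := by revert a; decide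

/-- core Möbius lemma over ZMod 2 -/
lemma moebius {α : Type*} [DecidableEq α] (h : Finset α → ZMod 2) (S : Finset α) :
    ∑ T ∈ S.powerset, ∑ U ∈ T.powerset, h U = h S := by
  induction S using Finset.induction generalizing h with
  | empty => simp
  | @insert a S ha ih =>
    rw [Finset.sum_powerset_insert ha]
    have e1 : ∀ T ∈ S.powerset, ∑ U ∈ (insert a T).powerset, h U
        = (∑ U ∈ T.powerset, h U) + ∑ U ∈ T.powerset, h (insert a U) := by
      intro T hT
      exact Finset.sum_powerset_insert (fun hc => ha (Finset.mem_powerset.1 hT hc)) h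
    rw [Finset.sum_congr rfl e1, Finset.sum_add_distrib, ih h,
      ih (fun U => h (insert a U))]
    abel_nf
    simp [two_smul, zmod2_add_self]

/-- indicator vector -/
def indB {n : ℕ} (T : Finset (Fin n)) : Fin n → ZMod 2 := fun i => if i ∈ T then 1 else 0

lemma anf_def' {n : ℕ} (f : BF n) (S : Finset (Fin n)) :
    anf f S = ∑ T ∈ S.powerset, f (indB T) := rfl

lemma eval_indB {n : ℕ} (f : BF n) (T : Finset (Fin n)) :
    f (indB T) = ∑ S ∈ T.powerset, anf f S := by
  rw [Finset.sum_congr rfl (fun S _ => anf_def' f S)]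
  exact (moebius (fun U => f (indB U)) T).symm |>.symm ▸ (moebius (fun U => f (indB U)) T)

lemma prod_indB {n : ℕ} (S T : Finset (Fin n)) :
    (∏ i ∈ S, indB T i) = if S ⊆ T then 1 else 0 := by
  by_cases h : S ⊆ T
  · simp only [h, if_true]
    apply Finset.prod_eq_one
    intro i hi
    simp [indB, h hi]
  · simp only [h, if_false]
    obtain ⟨i, hiS, hiT⟩ := Finset.not_subset.1 h
    apply Finset.prod_eq_zero hiS
    simp [indB, hiT]

lemma zmod2_cases (a : ZMod 2) : a = 0 ∨ a = 1 := by revert a; decide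

lemma exists_indB {n : ℕ} (x : Fin n → ZMod 2) :
    x = indB (Finset.univ.filter (fun i => x i = 1)) := by
  funext i
  simp only [indB, Finset.mem_filter, Finset.mem_univ, true_and]
  rcases zmod2_cases (x i) with h | h <;> simp [h]

/-- evaluation of a Boolean function via its ANF -/
lemma eval_anf {n : ℕ} (f : BF n) (x : Fin n → ZMod 2) :
    f x = ∑ S : Finset (Fin n), anf f S * ∏ i ∈ S, x i := by
  conv_lhs => rw [exists_indB x]
  set T := Finset.univ.filter (fun i => (x i) = 1) with hT
  rw [eval_indB f T]
  have : ∀ S : Finset (Fin n), anf f S * ∏ i ∈ S, x i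
      = if S ∈ T.powerset then anf f S else 0 := by
    intro S
    have hx : ∀ i ∈ S, x i = indB T i := by
      intro i _; rw [exists_indB x]
    rw [Finset.prod_congr rfl hx, prod_indB]
    simp only [Finset.mem_powerset]
    split <;> simp
  rw [Finset.sum_congr rfl (fun S _ => this S), Finset.sum_ite_mem,
    Finset.univ_inter]

/-- the ANF of an explicit multilinear-polynomial expression -/
lemma anf_funOf {n : ℕ} (c : Finset (Fin n) → ZMod 2) (T : Finset (Fin n)) :
    anf (fun x => ∑ S : Finset (Fin n), c S * ∏ i ∈ S, x i) T = c T := by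
  rw [anf_def']
  have : ∀ U ∈ T.powerset, (∑ S : Finset (Fin n), c S * ∏ i ∈ S, indB U i)
      = ∑ S ∈ U.powerset, c S := by
    intro U _
    have : ∀ S : Finset (Fin n), c S * ∏ i ∈ S, indB U i
        = if S ∈ U.powerset then c S else 0 := by
      intro S
      rw [prod_indB]
      simp only [Finset.mem_powerset]
      split <;> simp
    rw [Finset.sum_congr rfl (fun S _ => this S), Finset.sum_ite_mem, Finset.univ_inter]
  rw [Finset.sum_congr rfl this]
  exact moebius c T

lemma prod_image_idem {α : Type*} [DecidableEq α] {n : ℕ} (A : Finset α)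
    (v : α → Fin n) (x : Fin n → ZMod 2) :
    (∏ a ∈ A, x (v a)) = ∏ j ∈ A.image v, x j := by
  induction A using Finset.induction with
  | empty => simp
  | @insert a A ha ih =>
    rw [Finset.prod_insert ha, Finset.image_insert, ih]
    by_cases hv : v a ∈ A.image v
    · rw [Finset.insert_eq_self.2 hv, ← Finset.mul_prod_erase _ _ hv, ← mul_assoc,
        zmod2_mul_self, Finset.mul_prod_erase _ _ hv]
    · rw [Finset.prod_insert hv]

/-- generic lemma: ANF support of an arbitrary sum of monomials -/
lemma anf_sum_monomials {m : ℕ} {ι : Type*} (J : Finset ι) (a : ι → ZMod 2)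
    (U : ι → Finset (Fin m)) (T : Finset (Fin m))
    (hne : anf (fun x => ∑ i ∈ J, a i * ∏ j ∈ U i, x j) T ≠ 0) :
    ∃ i ∈ J, a i ≠ 0 ∧ U i = T := by
  classical
  have key : (fun x : Fin m → ZMod 2 => ∑ i ∈ J, a i * ∏ j ∈ U i, x j)
      = fun x => ∑ S : Finset (Fin m), (∑ i ∈ J.filter (fun i => U i = S), a i) * ∏ j ∈ S, x j := by
    funext x
    rw [← Finset.sum_fiberwise J (fun i => U i) (fun i => a i * ∏ j ∈ U i, x j)]
    apply Finset.sum_congr rfl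
    intro S _
    rw [Finset.sum_mul]
    apply Finset.sum_congr rfl
    intro i hi
    rw [(Finset.mem_filter.1 hi).2]
  rw [key, anf_funOf] at hne
  obtain ⟨i, hi, hai⟩ := Finset.exists_ne_zero_of_sum_ne_zero hne
  exact ⟨i, (Finset.mem_filter.1 hi).1, hai, (Finset.mem_filter.1 hi).2⟩

lemma anf_comp_affine {m n : ℕ} (f : BF n)
    (L : (Fin m → ZMod 2) →ₗ[ZMod 2] (Fin n → ZMod 2)) (b : Fin n → ZMod 2)
    {d : ℕ} (hd : ∀ S, anf f S ≠ 0 → S.card ≤ d)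
    (T : Finset (Fin m)) (hT : anf (fun x => f (L x + b)) T ≠ 0) : T.card ≤ d := by
  classical
  set c : Fin m → Fin n → ZMod 2 := fun j i => L (fun t => if j = t then 1 else 0) i with hc
  set J : Finset ((_ : Finset (Fin n)) × (T' : Finset (Fin n)) × (∀ a ∈ T', Fin m)) :=
    Finset.univ.sigma (fun S => S.powerset.sigma (fun T' => T'.pi (fun _ => Finset.univ)))
    with hJ
  set A : ((_ : Finset (Fin n)) × (T' : Finset (Fin n)) × (∀ a ∈ T', Fin m)) → ZMod 2 :=
    fun q => anf f q.1 * ((∏ i ∈ q.1 \ q.2.1, b i) *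
      ∏ i ∈ q.2.1.attach, c (q.2.2 i.1 i.2) i.1) with hA
  set U : ((_ : Finset (Fin n)) × (T' : Finset (Fin n)) × (∀ a ∈ T', Fin m)) → Finset (Fin m) :=
    fun q => q.2.1.attach.image (fun i => q.2.2 i.1 i.2) with hU
  have hrep : (fun x : Fin m → ZMod 2 => f (L x + b))
      = fun x => ∑ q ∈ J, A q * ∏ j ∈ U q, x j := by
    funext x
    have key : ∀ i : Fin n, (L x) i = ∑ j : Fin m, x j * c j i := by
      intro i
      rw [LinearMap.pi_apply_eq_sum_univ L x]
      rw [Finset.sum_apply]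
      exact Finset.sum_congr rfl (fun j _ => rfl)
    calc f (L x + b)
        = ∑ S : Finset (Fin n), anf f S * ∏ i ∈ S, ((L x) i + b i) := by
          rw [eval_anf f (L x + b)]; rfl
      _ = ∑ S : Finset (Fin n), anf f S * ∑ T' ∈ S.powerset,
            (∏ i ∈ T', (L x) i) * ∏ i ∈ S \ T', b i := by
          exact Finset.sum_congr rfl (fun S _ => by rw [Finset.prod_add])
      _ = ∑ S : Finset (Fin n), ∑ T' ∈ S.powerset, ∑ p ∈ T'.pi (fun _ => (Finset.univ : Finset (Fin m))),
            (anf f S * ((∏ i ∈ S \ T', b i) *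
              ∏ i ∈ T'.attach, c (p i.1 i.2) i.1)) *
            ∏ j ∈ T'.attach.image (fun i => p i.1 i.2), x j := by
          apply Finset.sum_congr rfl; intro S _
          rw [Finset.mul_sum]
          apply Finset.sum_congr rfl; intro T' _
          have e3 : ∏ i ∈ T', (L x) i
              = ∑ p ∈ T'.pi (fun _ => (Finset.univ : Finset (Fin m))),
                  (∏ j ∈ T'.attach.image (fun i => p i.1 i.2), x j) *
                  ∏ i ∈ T'.attach, c (p i.1 i.2) i.1 := by
            rw [Finset.prod_congr rfl (fun i _ => key i), Finset.prod_sum]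
            apply Finset.sum_congr rfl; intro p _
            rw [Finset.prod_mul_distrib, prod_image_idem]
          rw [e3, Finset.sum_mul, Finset.mul_sum]
          apply Finset.sum_congr rfl; intro p _
          ring
      _ = ∑ q ∈ J, A q * ∏ j ∈ U q, x j := by
          rw [hJ, Finset.sum_sigma]
          apply Finset.sum_congr rfl; intro S _
          rw [Finset.sum_sigma]
  rw [hrep] at hT
  obtain ⟨q, hqJ, hq0, hqU⟩ := anf_sum_monomials J A U T hT
  have hS : anf f q.1 ≠ 0 := fun h => hq0 (by rw [hA]; simp [h])
  have h1 : q.1.card ≤ d := hd _ hS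
  have hmem := Finset.mem_sigma.1 hqJ
  have h2 : q.2.1.card ≤ q.1.card :=
    Finset.card_le_card (Finset.mem_powerset.1 (Finset.mem_sigma.1 hmem.2).1)
  calc T.card = (U q).card := by rw [hqU]
    _ ≤ q.2.1.attach.card := Finset.card_image_le
    _ = q.2.1.card := q.2.1.card_attach
    _ ≤ d := le_trans h2 h1

lemma degB_le_iff {n d : ℕ} (f : BF n) :
    degB f ≤ (d : WithBot ℕ) ↔ ∀ S, anf f S ≠ 0 → S.card ≤ d := by
  rw [degB, Finset.sup_le_iff]
  constructor
  · intro h S hS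
    exact_mod_cast h S (by simp [hS])
  · intro h S hS
    exact_mod_cast h S (Finset.mem_filter.1 hS).2

lemma le_degB {n : ℕ} (f : BF n) (S : Finset (Fin n)) (h : anf f S ≠ 0) :
    (S.card : WithBot ℕ) ≤ degB f := by
  rw [degB]
  exact Finset.le_sup (f := fun S : Finset (Fin n) => (S.card : WithBot ℕ))
    (Finset.mem_filter.2 ⟨Finset.mem_univ _, h⟩)

lemma exists_anf_ne_zero_of_degB {n r : ℕ} (f : BF n) (h : degB f = (r : WithBot ℕ)) :
    ∃ S, anf f S ≠ 0 := by
  by_contra hc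
  push_neg at hc
  have : degB f = ⊥ := by
    rw [degB]
    have : (Finset.univ.filter (fun S : Finset (Fin n) => anf f S ≠ 0)) = ∅ := by
      apply Finset.filter_false_of_mem; intro S _; simpa using hc S
    rw [this]; rfl
  rw [this] at h
  exact (WithBot.bot_ne_coe h).elim

lemma degB_eq_of_homog {n r : ℕ} (f : BF n) (hhom : ∀ S, anf f S ≠ 0 → S.card = r)
    (hex : ∃ S, anf f S ≠ 0) : degB f = (r : WithBot ℕ) := by
  obtain ⟨S0, hS0⟩ := hex
  apply le_antisymm
  · rw [degB_le_iff]; intro S hS; exact le_of_eq (hhom S hS)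
  · have := le_degB f S0 hS0
    rwa [hhom S0 hS0] at this

/-- reindexing a powerset sum along an embedding -/
lemma sum_powerset_map {α β M : Type*} [DecidableEq α] [DecidableEq β] [AddCommMonoid M]
    (e : α ↪ β) (U : Finset α) (g : Finset β → M) :
    ∑ V ∈ U.powerset, g (V.map e) = ∑ W ∈ (U.map e).powerset, g W := by
  apply Finset.sum_bij (fun V _ => V.map e)
  · intro V hV
    exact Finset.mem_powerset.2 (Finset.map_subset_map.2 (Finset.mem_powerset.1 hV))
  · intro V1 h1 V2 h2 hmap
    exact Finset.map_injective e hmap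
  · intro W hW
    refine ⟨U.filter (fun a => e a ∈ W), Finset.mem_powerset.2 (Finset.filter_subset _ _), ?_⟩
    ext b
    simp only [Finset.mem_map, Finset.mem_filter]
    constructor
    · rintro ⟨a, ⟨_, haW⟩, rfl⟩; exact haW
    · intro hbW
      obtain ⟨a, haU, rfl⟩ := Finset.mem_map.1 (Finset.mem_powerset.1 hW hbW)
      exact ⟨a, ⟨haU, hbW⟩, rfl⟩
  · intro V hV; rfl

lemma eEmb_inj {n k : ℕ} (hk : k ≤ n) :
    Function.Injective (fun j : Fin (n - k) => (⟨k + j, by omega⟩ : Fin n)) := by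
    intro a b h
    simp only [Fin.mk.injEq] at h
    exact Fin.ext (by omega)

def eEmb {n k : ℕ} (hk : k ≤ n) : Fin (n - k) ↪ Fin n :=
  ⟨fun j => ⟨k + j, by omega⟩, eEmb_inj hk⟩

def iotaL {n k : ℕ} (hk : k ≤ n) : (Fin (n - k) → ZMod 2) →ₗ[ZMod 2] (Fin n → ZMod 2) where
  toFun y := fun i => if h : k ≤ (i : ℕ) then y ⟨(i : ℕ) - k, by omega⟩ else 0
  map_add' y z := by funext i; by_cases h : k ≤ (i : ℕ) <;> simp [h]
  map_smul' a y := by funext i; by_cases h : k ≤ (i : ℕ) <;> simp [h]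

lemma iotaL_apply_e {n k : ℕ} (hk : k ≤ n) (y : Fin (n - k) → ZMod 2) (j : Fin (n - k)) :
    iotaL hk y (eEmb hk j) = y j := by
  simp only [iotaL, eEmb, LinearMap.coe_mk, AddHom.coe_mk, Function.Embedding.coeFn_mk]
  rw [dif_pos (by omega)]
  congr 1
  exact Fin.ext (by simp)

lemma iotaL_apply_lt {n k : ℕ} (hk : k ≤ n) (y : Fin (n - k) → ZMod 2) (i : Fin n)
    (hi : (i : ℕ) < k) : iotaL hk y i = 0 := by
  simp only [iotaL, LinearMap.coe_mk, AddHom.coe_mk]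
  rw [dif_neg (by omega)]

lemma iotaL_inj {n k : ℕ} (hk : k ≤ n) : Function.Injective (iotaL hk) := by
  intro y z h
  funext j
  have := congrFun h (eEmb hk j)
  rwa [iotaL_apply_e, iotaL_apply_e] at this

lemma iotaL_indB {n k : ℕ} (hk : k ≤ n) (U : Finset (Fin (n - k))) :
    iotaL hk (indB U) = indB (U.map (eEmb hk)) := by
  funext i
  simp only [iotaL, LinearMap.coe_mk, AddHom.coe_mk, indB]
  by_cases h : k ≤ (i : ℕ)
  · rw [dif_pos h]
    have : (⟨(i : ℕ) - k, by omega⟩ : Fin (n - k)) ∈ U ↔ i ∈ U.map (eEmb hk) := by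
      simp only [Finset.mem_map, eEmb, Function.Embedding.coeFn_mk]
      constructor
      · intro hm
        refine ⟨_, hm, Fin.ext ?_⟩
        show k + ((i : ℕ) - k) = (i : ℕ)
        omega
      · rintro ⟨j, hj, rfl⟩
        convert hj using 2
        simp
    split_ifs with h1 h2 h2 <;> first | rfl | (exact absurd (this.1 h1) h2) |
      (exact absurd (this.2 h2) h1)
  · rw [dif_neg h]
    have : i ∉ U.map (eEmb hk) := by
      simp only [Finset.mem_map, eEmb, Function.Embedding.coeFn_mk]
      rintro ⟨j, _, rfl⟩
      simp at h
    rw [if_neg this]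

lemma anf_comp_iota {n k : ℕ} (hk : k ≤ n) (F : BF n) (T : Finset (Fin (n - k))) :
    anf (fun y => F (iotaL hk y)) T = anf F (T.map (eEmb hk)) := by
  rw [anf_def']
  have step : ∀ U ∈ T.powerset, F (iotaL hk (indB U))
      = ∑ V ∈ U.powerset, anf F (V.map (eEmb hk)) := by
    intro U _
    rw [iotaL_indB, eval_indB F (U.map (eEmb hk)), ← sum_powerset_map]
  calc ∑ U ∈ T.powerset, (fun y => F (iotaL hk y)) (indB U)
      = ∑ U ∈ T.powerset, ∑ V ∈ U.powerset, anf F (V.map (eEmb hk)) :=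
        Finset.sum_congr rfl step
    _ = anf F (T.map (eEmb hk)) := moebius (fun V => anf F (V.map (eEmb hk))) T

noncomputable section LA
variable {n k : ℕ}

def projLow (hk : k ≤ n) : (Fin n → ZMod 2) →ₗ[ZMod 2] (Fin k → ZMod 2) :=
  LinearMap.funLeft (ZMod 2) (ZMod 2) (fun a : Fin k => (⟨(a : ℕ), by omega⟩ : Fin n))

def projHigh (hk : k ≤ n) : (Fin n → ZMod 2) →ₗ[ZMod 2] (Fin (n - k) → ZMod 2) :=
  LinearMap.funLeft (ZMod 2) (ZMod 2) (eEmb hk)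

def mixMap (hk : k ≤ n) : (Fin k → ZMod 2) × (Fin (n - k) → ZMod 2) →ₗ[ZMod 2]
    (Fin n → ZMod 2) where
  toFun p := fun i => if h : (i : ℕ) < k then p.1 ⟨i, h⟩ else p.2 ⟨(i : ℕ) - k, by omega⟩
  map_add' p q := by funext i; by_cases h : (i : ℕ) < k <;> simp [h]
  map_smul' a p := by funext i; by_cases h : (i : ℕ) < k <;> simp [h]

def splitE (hk : k ≤ n) : (Fin n → ZMod 2) ≃ₗ[ZMod 2]
    (Fin k → ZMod 2) × (Fin (n - k) → ZMod 2) := by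
  apply LinearEquiv.ofLinear ((projLow hk).prod (projHigh hk)) (mixMap hk)
  · apply LinearMap.ext; intro p
    apply Prod.ext
    · funext a
      simp only [LinearMap.comp_apply, LinearMap.prod_apply, Function.prod, projLow,
        LinearMap.funLeft_apply, mixMap, LinearMap.coe_mk, AddHom.coe_mk, LinearMap.id_apply]
      rw [dif_pos (by simpa using a.2)]
    · funext j
      simp only [LinearMap.comp_apply, LinearMap.prod_apply, Function.prod, projHigh,
        LinearMap.funLeft_apply, mixMap, eEmb, Function.Embedding.coeFn_mk,
        LinearMap.coe_mk, AddHom.coe_mk, LinearMap.id_apply]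
      rw [dif_neg (by simp)]
      congr 1
      exact Fin.ext (by simp)
  · apply LinearMap.ext; intro x
    funext i
    simp only [LinearMap.comp_apply, LinearMap.prod_apply, Function.prod, mixMap,
      LinearMap.coe_mk, AddHom.coe_mk, LinearMap.id_apply, projLow, projHigh,
      LinearMap.funLeft_apply, eEmb, Function.Embedding.coeFn_mk]
    by_cases h : (i : ℕ) < k
    · rw [dif_pos h]
    · rw [dif_neg h]
      congr 1
      exact Fin.ext (by simp; omega)

lemma splitE_iotaL (hk : k ≤ n) (y : Fin (n - k) → ZMod 2) :
    splitE hk (iotaL hk y) = (0, y) := by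
  apply Prod.ext
  · funext a
    simp only [splitE, LinearEquiv.ofLinear_apply, LinearMap.prod_apply, Function.prod, projLow,
      LinearMap.funLeft_apply]
    exact iotaL_apply_lt hk y _ (by simpa using a.2)
  · funext j
    simp only [splitE, LinearEquiv.ofLinear_apply, LinearMap.prod_apply, Function.prod, projHigh,
      LinearMap.funLeft_apply]
    exact iotaL_apply_e hk y j

/-- extend an injective linear map `M : F_2^{n-k} → F_2^n` to a linear automorphism of
`F_2^n` precomposed with the canonical embedding `iotaL`. -/
lemma exists_extend (hk : k ≤ n) (M : (Fin (n - k) → ZMod 2) →ₗ[ZMod 2] (Fin n → ZMod 2))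
    (hM : Function.Injective M) :
    ∃ L : (Fin n → ZMod 2) ≃ₗ[ZMod 2] (Fin n → ZMod 2),
      ∀ y, L (iotaL hk y) = M y := by
  obtain ⟨W, hW⟩ := Submodule.exists_isCompl (LinearMap.range M)
  have hfin : Module.finrank (ZMod 2) W = k := by
    have h1 := Submodule.finrank_add_eq_of_isCompl hW
    rw [LinearMap.finrank_range_of_inj hM, Module.finrank_fin_fun, Module.finrank_fin_fun] at h1
    omega
  let bW : Module.Basis (Fin k) (ZMod 2) W := Module.finBasisOfFinrankEq (ZMod 2) W hfin
  let equivW : (Fin k → ZMod 2) ≃ₗ[ZMod 2] W := bW.equivFun.symm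
  let equivR : (Fin (n - k) → ZMod 2) ≃ₗ[ZMod 2] LinearMap.range M :=
    LinearEquiv.ofInjective M hM
  let Φ : ((Fin k → ZMod 2) × (Fin (n - k) → ZMod 2)) ≃ₗ[ZMod 2] (Fin n → ZMod 2) :=
    (equivW.prodCongr equivR).trans (Submodule.prodEquivOfIsCompl W (LinearMap.range M) hW.symm)
  refine ⟨(splitE hk).trans Φ, fun y => ?_⟩
  rw [LinearEquiv.trans_apply, splitE_iotaL]
  show Submodule.prodEquivOfIsCompl W (LinearMap.range M) hW.symm
    ((equivW.prodCongr equivR) (0, y)) = M y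
  have : (equivW.prodCongr equivR) ((0 : Fin k → ZMod 2), y) = (0, equivR y) := by
    simp [LinearEquiv.prodCongr_apply]
  rw [this]
  rw [Submodule.coe_prodEquivOfIsCompl']
  simp [equivR]
end LA

lemma addv_self {n : ℕ} (v : Fin n → ZMod 2) : v + v = 0 := by
  funext i; exact zmod2_add_self (v i)

/-- a homogeneous `f` of degree `r ≤ n` has a degree-drop affine subspace of
co-dimension `k ≤ n` iff `f ∼_{r-1} g` for some homogeneous `g` of degree `r` each of whose
monomials contains at least one of the variables `x₁,…,x_k`. -/
theorem stmt4 {n r k : ℕ} (hrn : r ≤ n) (hk : k ≤ n)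
    (f : BF n) (hhom : Homog f r) (hdeg : degB f = (r : WithBot ℕ)) :
    HasDDS f k ↔
      ∃ g : BF n, Homog g r ∧ degB g = (r : WithBot ℕ) ∧
        (∀ S : Finset (Fin n), anf g S ≠ 0 → ∃ i ∈ S, (i : ℕ) < k) ∧
        SimEq r f g := by
  constructor
  · -- forward
    rintro ⟨A, φ, ⟨M, b, hφ⟩, hφinj, -, hφdeg⟩
    have hMinj : Function.Injective M := by
      intro y z h
      apply hφinj
      rw [hφ]; simp only [h]
    obtain ⟨L, hL⟩ := exists_extend hk M hMinj
    set F : BF n := fun x => f (L x + b) with hF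
    have hFle : ∀ S, anf F S ≠ 0 → S.card ≤ r := fun S hS =>
      anf_comp_affine f L.toLinearMap b (fun S' hS' => le_of_eq (hhom S' hS')) S hS
    have hFeq : (fun x => F (L.symm.toLinearMap x + L.symm b)) = f := by
      funext x
      show f (L (L.symm x + L.symm b) + b) = f x
      rw [map_add, L.apply_symm_apply, L.apply_symm_apply, add_assoc, addv_self, add_zero]
    -- existence of a top-degree monomial of F
    obtain ⟨S1, hS1⟩ := exists_anf_ne_zero_of_degB f hdeg
    have hS1r : S1.card = r := hhom S1 hS1
    have hFex : ∃ S, anf F S ≠ 0 ∧ S.card = r := by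
      by_contra hc
      push_neg at hc
      rcases Nat.eq_zero_or_pos r with hr | hr
      · have hF0 : ∀ S, anf F S = 0 := by
          intro S
          by_contra h0
          exact hc S h0 (by have := hFle S h0; omega)
        have hFz : ∀ x, F x = 0 := by
          intro x
          rw [eval_anf F x]
          exact Finset.sum_eq_zero (fun S _ => by rw [hF0 S, zero_mul])
        have hfz : ∀ x, f x = 0 := by
          intro x
          rw [← hFeq]
          exact hFz _
        apply hS1
        rw [anf_def']
        exact Finset.sum_eq_zero (fun T _ => hfz _)
      · have hble : ∀ S, anf F S ≠ 0 → S.card ≤ r - 1 := by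
          intro S hS
          have h1 := hFle S hS
          have h2 := hc S hS
          omega
        have := anf_comp_affine F L.symm.toLinearMap (L.symm b) hble S1
          (by rw [show (fun x => F (L.symm.toLinearMap x + L.symm b)) = f from hFeq]; exact hS1)
        omega
    obtain ⟨S0, hS0F, hS0r⟩ := hFex
    set gc : Finset (Fin n) → ZMod 2 := fun S => if S.card = r then anf F S else 0 with hgc
    set lc : Finset (Fin n) → ZMod 2 := fun S => if S.card = r then 0 else anf F S with hlc
    set g : BF n := fun x => ∑ S : Finset (Fin n), gc S * ∏ i ∈ S, x i with hg
    set hlow : BF n := fun x => ∑ S : Finset (Fin n), lc S * ∏ i ∈ S, x i with hlowd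
    have hanfg : ∀ S, anf g S = gc S := fun S => anf_funOf gc S
    have hanfh : ∀ S, anf hlow S = lc S := fun S => anf_funOf lc S
    have hsplit : ∀ x, F x = g x + hlow x := by
      intro x
      rw [eval_anf F x, hg, hlowd, ← Finset.sum_add_distrib]
      apply Finset.sum_congr rfl
      intro S _
      rw [← add_mul]
      congr 1
      by_cases h : S.card = r <;> simp [hgc, hlc, h]
    have hghom : Homog g r := by
      intro S hS
      rw [hanfg] at hS
      by_contra h
      simp only [hgc, if_neg h] at hS
      exact hS rfl
    refine ⟨g, hghom, ?_, ?_, L, b, hlow, ?_, ?_⟩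
    · exact degB_eq_of_homog g hghom ⟨S0, by rw [hanfg]; simpa [hgc, hS0r] using hS0F⟩
    · intro S hS
      rw [hanfg] at hS
      have hcard : S.card = r := by
        by_contra h; simp only [hgc, if_neg h] at hS; exact hS rfl
      have hFS : anf F S ≠ 0 := by simpa [hgc, hcard] using hS
      by_contra hcon
      push_neg at hcon
      set T : Finset (Fin (n - k)) := S.attach.image
        (fun i => (⟨(i.1 : ℕ) - k, by
          have h1 := hcon i.1 i.2; have h2 := i.1.isLt; omega⟩ : Fin (n - k))) with hT
      have hTmap : T.map (eEmb hk) = S := by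
        ext i
        simp only [hT, Finset.mem_map, Finset.mem_image, Finset.mem_attach, eEmb,
          Function.Embedding.coeFn_mk, true_and]
        constructor
        · rintro ⟨t, ⟨j, rfl⟩, rfl⟩
          have h1 := hcon j.1 j.2
          have : (⟨k + ((j.1 : ℕ) - k), by omega⟩ : Fin n) = j.1 := Fin.ext (by simp; omega)
          rw [this]
          exact j.2
        · intro hi
          refine ⟨⟨(i : ℕ) - k, by have := hcon i hi; have := i.isLt; omega⟩,
            ⟨⟨i, hi⟩, rfl⟩, Fin.ext ?_⟩
          have := hcon i hi
          simp
          omega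
      have hanfT : anf (fun y => F (iotaL hk y)) T ≠ 0 := by
        rw [anf_comp_iota hk F T, hTmap]; exact hFS
      have hcardT : T.card = r := by
        have h1 : (T.map (eEmb hk)).card = T.card := Finset.card_map _
        rw [hTmap] at h1
        omega
      have hFι : (fun y => F (iotaL hk y)) = f ∘ φ := by
        funext y
        show f (L (iotaL hk y) + b) = f (φ y)
        rw [hL, hφ]
      have h1 : (r : WithBot ℕ) ≤ degB (f ∘ φ) := by
        rw [← hFι]
        have h2 := le_degB _ T hanfT
        rwa [hcardT] at h2
      have h2 := lt_of_le_of_lt h1 hφdeg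
      rw [hdeg] at h2
      exact lt_irrefl _ h2
    · rw [degB_le_iff]
      intro S hS
      rw [hanfh] at hS
      have h1 : S.card ≠ r := by
        by_contra h; simp only [hlc, if_pos h] at hS; exact hS rfl
      have h2 : anf F S ≠ 0 := by simpa [hlc, h1] using hS
      have := hFle S h2
      omega
    · funext x
      have h1 := hsplit x
      show g x = F x + hlow x
      rw [h1, add_assoc, zmod2_add_self, add_zero]
  · -- backward
    rintro ⟨g, hg_hom, hg_deg, hg_mon, L, b, hlow, hlow_deg, hg_eq⟩
    obtain ⟨S0, hS0⟩ := exists_anf_ne_zero_of_degB g hg_deg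
    obtain ⟨i0, hi0S, -⟩ := hg_mon S0 hS0
    have hr1 : 1 ≤ r := by
      have := hg_hom S0 hS0
      have : S0.Nonempty := ⟨i0, hi0S⟩
      have := Finset.card_pos.2 this
      omega
    set φ : (Fin (n - k) → ZMod 2) → (Fin n → ZMod 2) :=
      fun y => L (iotaL hk y) + b with hφ
    refine ⟨Set.range φ, φ, ⟨L.toLinearMap ∘ₗ iotaL hk, b, rfl⟩, ?_, rfl, ?_⟩
    · intro y z h
      have h2 : L (iotaL hk y) = L (iotaL hk z) := by
        have := congrArg (fun v => v + b) h
        simpa using add_right_cancel h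
      exact iotaL_inj hk (L.injective h2)
    · -- degree drop
      have hfφ : f ∘ φ = fun y => hlow (iotaL hk y) := by
        funext y
        have h1 := congrFun hg_eq (iotaL hk y)
        -- h1 : g (iotaL y) = f (L (iotaL y) + b) + hlow (iotaL y)
        have hg0 : g (iotaL hk y) = 0 := by
          rw [eval_anf g (iotaL hk y)]
          apply Finset.sum_eq_zero
          intro S _
          by_cases hS : anf g S = 0
          · rw [hS, zero_mul]
          · obtain ⟨i, hiS, hik⟩ := hg_mon S hS
            rw [Finset.prod_eq_zero hiS (iotaL_apply_lt hk y i hik), mul_zero]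
        rw [hg0] at h1
        show f (L (iotaL hk y) + b) = hlow (iotaL hk y)
        have h2 : f (L (iotaL hk y) + b) + hlow (iotaL hk y) = 0 := by
          exact h1.symm
        have h3 := congrArg (fun t => t + hlow (iotaL hk y)) h2
        simpa [add_assoc, zmod2_add_self] using h3
      rw [hfφ, hdeg]
      have hbound : ∀ T, anf (fun y => hlow (iotaL hk y)) T ≠ 0 → T.card ≤ r - 1 := by
        intro T hT
        have hlb : ∀ S, anf hlow S ≠ 0 → S.card ≤ r - 1 := (degB_le_iff hlow).1 hlow_deg
        have he : (fun y => hlow (iotaL hk y)) = fun y => hlow ((iotaL hk) y + 0) := by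
          funext y; rw [add_zero]
        rw [he] at hT
        exact anf_comp_affine hlow (iotaL hk) 0 hlb T hT
      calc degB (fun y => hlow (iotaL hk y)) ≤ ((r - 1 : ℕ) : WithBot ℕ) :=
            (degB_le_iff _).2 hbound
        _ < (r : WithBot ℕ) := by exact_mod_cast Nat.sub_lt hr1 one_pos
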